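/- The following statements are equivalent: (i) for all i = 1, …, d−1, (r_i, t_{d−i}) ∈ S; (ii) AP_S = {(0,0)} ∪ {(r_i, t_{d−i}) : 1 ≤ i ≤ d−1}; (iii) AP_S has exactly d elements; (iv) the exceptional set E_S is empty. (These conditions characterize the arithmetic Cohen–Macaulayness of the projective monomial curve associated to A.) -/

import Mathlib

open scoped BigOperators

namespace SumsetsCurve

/-- The `s`-fold sumset of `A = {a 0, …, a (n-1)}`:
all sums of `s` elements of `A` (with `0A = {0}`). -/
def sumset (n : ℕ) (a : ℕ → ℕ) (s : ℕ) : Set ℕ :=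
  {x | ∃ f : Fin s → ℕ, (∀ i, f i < n) ∧ x = ∑ i, a (f i)}

/-- The numerical semigroup (additive submonoid of ℕ) generated by `B`. -/
def numSG (B : Set ℕ) : Set ℕ := (AddSubmonoid.closure B : AddSubmonoid ℕ)

/-- `S₁`, the numerical semigroup generated by `A`. -/
def S1 (n : ℕ) (a : ℕ → ℕ) : Set ℕ := numSG {x | ∃ i < n, a i = x}

/-- `S₂`, the numerical semigroup generated by `d - A`. -/
def S2 (n d : ℕ) (a : ℕ → ℕ) : Set ℕ := numSG {x | ∃ i < n, d - a i = x}

/-- The conductor of `S ⊆ ℕ`: the least `c` with `c + ℕ ⊆ S`. -/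
noncomputable def conductor (S : Set ℕ) : ℕ := sInf {c | ∀ m, c ≤ m → m ∈ S}

/-- The genus of `S ⊆ ℕ`: the number of gaps `|ℕ \ S|`. -/
noncomputable def genus (S : Set ℕ) : ℕ := Set.ncard {x : ℕ | x ∉ S}

/-- `C = S ∩ [0, conductor S - 2]` (the inequality is taken in ℤ). -/
def Cpart (S : Set ℕ) : Set ℕ := {x | x ∈ S ∧ (x : ℤ) ≤ (conductor S : ℤ) - 2}

/-- The decomposition `sA = C₁ ⊔ [c₁, sd - c₂] ⊔ (sd - C₂)` of the Structure Theorem,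
viewed inside ℤ. -/
def structDecomp (n d : ℕ) (a : ℕ → ℕ) (s : ℕ) : Prop :=
  (Nat.cast '' sumset n a s : Set ℤ)
      = (Nat.cast '' Cpart (S1 n a))
        ∪ Set.Icc ((conductor (S1 n a) : ℤ)) ((s * d : ℤ) - (conductor (S2 n d a) : ℤ))
        ∪ ((fun c => (s * d : ℤ) - c) '' (Nat.cast '' Cpart (S2 n d a)))
    ∧ Disjoint (Nat.cast '' Cpart (S1 n a) : Set ℤ)
        (Set.Icc ((conductor (S1 n a) : ℤ)) ((s * d : ℤ) - (conductor (S2 n d a) : ℤ)))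
    ∧ Disjoint (Nat.cast '' Cpart (S1 n a) : Set ℤ)
        ((fun c => (s * d : ℤ) - c) '' (Nat.cast '' Cpart (S2 n d a)))
    ∧ Disjoint
        (Set.Icc ((conductor (S1 n a) : ℤ)) ((s * d : ℤ) - (conductor (S2 n d a) : ℤ)))
        ((fun c => (s * d : ℤ) - c) '' (Nat.cast '' Cpart (S2 n d a)))

/-- `σ(A)`: the least `σ` such that the Structure Theorem decomposition holds
for all `s ≥ σ`. -/
noncomputable def sigmaA (n d : ℕ) (a : ℕ → ℕ) : ℕ :=
  sInf {σ | ∀ s, σ ≤ s → structDecomp n d a s}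

/-- `r(A)`: the least `r` such that `|sA| = sd + 1 - g₁ - g₂` for all `s ≥ r`
(the regularity of the Hilbert function of `k[C_A]`). -/
noncomputable def rA (n d : ℕ) (a : ℕ → ℕ) : ℕ :=
  sInf {r | ∀ s, r ≤ s →
    ((sumset n a s).ncard : ℤ)
      = (s : ℤ) * d + 1 - genus (S1 n a) - genus (S2 n d a)}

/-- The homogeneous semigroup `S ⊆ ℕ²` generated by `{(a, d-a) : a ∈ A}`. -/
def SS (n d : ℕ) (a : ℕ → ℕ) : Set (ℕ × ℕ) :=
  (AddSubmonoid.closure {p : ℕ × ℕ | ∃ i < n, p = (a i, d - a i)} : AddSubmonoid (ℕ × ℕ))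

/-- The Apery set `AP_S = {p ∈ S : p - (0,d) ∉ S, p - (d,0) ∉ S}`. -/
def APS (n d : ℕ) (a : ℕ → ℕ) : Set (ℕ × ℕ) :=
  {p ∈ SS n d a |
    (¬ ∃ q ∈ SS n d a, q + (0, d) = p) ∧ (¬ ∃ q ∈ SS n d a, q + (d, 0) = p)}

/-- The exceptional set
`E_S = {p ∈ S : p - (0,d) ∈ S, p - (d,0) ∈ S, p - (d,d) ∉ S}`. -/
def ES (n d : ℕ) (a : ℕ → ℕ) : Set (ℕ × ℕ) :=
  {p ∈ SS n d a |
    (∃ q ∈ SS n d a, q + (0, d) = p) ∧ (∃ q ∈ SS n d a, q + (d, 0) = p) ∧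
      (¬ ∃ q ∈ SS n d a, q + (d, d) = p)}

/-- The level `L_s = {(x,y) ∈ ℕ² : x + y = sd}`. -/
def Lev (d s : ℕ) : Set (ℕ × ℕ) := {p | p.1 + p.2 = s * d}

/-- `AP_s = AP_S ∩ L_s`. -/
def APs (n d : ℕ) (a : ℕ → ℕ) (s : ℕ) : Set (ℕ × ℕ) := APS n d a ∩ Lev d s

/-- `E_s = E_S ∩ L_s`. -/
def Es (n d : ℕ) (a : ℕ → ℕ) (s : ℕ) : Set (ℕ × ℕ) := ES n d a ∩ Lev d s

/-- `m(AP_S) = max {s : AP_s ≠ ∅}`. -/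
noncomputable def mAP (n d : ℕ) (a : ℕ → ℕ) : ℕ := sSup {s | APs n d a s ≠ ∅}

/-- The Apery set of `S₁` with respect to `d`: `{x ∈ S₁ : x - d ∉ S₁}`. -/
def Ap1 (n d : ℕ) (a : ℕ → ℕ) : Set ℕ := {x ∈ S1 n a | ¬ ∃ y ∈ S1 n a, y + d = x}

/-- The Apery set of `S₂` with respect to `d`: `{x ∈ S₂ : x - d ∉ S₂}`. -/
def Ap2 (n d : ℕ) (a : ℕ → ℕ) : Set ℕ := {x ∈ S2 n d a | ¬ ∃ y ∈ S2 n d a, y + d = x}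

/-- `G`, the subgroup of ℤ² generated by `S`. -/
def G (n d : ℕ) (a : ℕ → ℕ) : AddSubgroup (ℤ × ℤ) :=
  AddSubgroup.closure {p | ∃ i < n, p = ((a i : ℤ), (d : ℤ) - (a i : ℤ))}

/-- `S₁` viewed inside ℤ. -/
def S1Z (n : ℕ) (a : ℕ → ℕ) : Set ℤ := Nat.cast '' S1 n a

/-- `S₂` viewed inside ℤ. -/
def S2Z (n d : ℕ) (a : ℕ → ℕ) : Set ℤ := Nat.cast '' S2 n d a

/-- `S' = G ∩ (S₁ × S₂)`. -/
def Sprime (n d : ℕ) (a : ℕ → ℕ) : Set (ℤ × ℤ) :=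
  {p | p ∈ G n d a ∧ p.1 ∈ S1Z n a ∧ p.2 ∈ S2Z n d a}

/-- The homogeneous semigroup `S` viewed inside ℤ². -/
def SZ (n d : ℕ) (a : ℕ → ℕ) : Set (ℤ × ℤ) :=
  (fun p : ℕ × ℕ => ((p.1 : ℤ), (p.2 : ℤ))) '' SS n d a


section CMHelpers

variable {n d : ℕ} {a : ℕ → ℕ}

private lemma cm_pair_add (x y u v : ℕ) : ((x, y) : ℕ × ℕ) + (u, v) = (x + u, y + v) := rfl

private lemma cm_resid {z : ℕ} (hd : 0 < d) (h : d ∣ z) (hz : z < 2 * d) :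
    z = 0 ∨ z = d := by
  rcases Nat.lt_or_ge z d with h1 | h1
  · exact Or.inl (Nat.eq_zero_of_dvd_of_lt h h1)
  · have h2 : d ∣ z - d := Nat.dvd_sub h dvd_rfl
    have h4 := Nat.eq_zero_of_dvd_of_lt h2 (show z - d < d by omega)
    omega

private lemma cm_res_pair {x y : ℕ} (hd : 0 < d) (h : d ∣ x + y) :
    x % d + y % d = 0 ∨ x % d + y % d = d := by
  obtain ⟨c, hc⟩ := h
  have h0 : (x + y) % d = 0 := by rw [hc]; exact Nat.mul_mod_right d c
  have h1 : (x % d + y % d) % d = 0 := by rw [← Nat.add_mod]; exact h0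
  have h2 : d ∣ x % d + y % d := Nat.dvd_of_mod_eq_zero h1
  have h3 : x % d < d := Nat.mod_lt _ hd
  have h4 : y % d < d := Nat.mod_lt _ hd
  exact cm_resid hd h2 (by omega)

private lemma cm_resB0 {A B e : ℕ} (h : A + B = 0 ∨ A + B = e) (hA : A = 0) (hB : B < e) :
    B = 0 := by omega

private lemma cm_resB {A B e : ℕ} (h : A + B = 0 ∨ A + B = e) (hA : 0 < A) : B = e - A := by
  omega

private lemma cm_mod2 {A B A' B' e : ℕ} (hB : B < e) (hB' : B' < e)
    (h1 : A + B = 0 ∨ A + B = e) (h2 : A' + B' = 0 ∨ A' + B' = e) (hm : A = A') : B = B' := by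
  omega

private lemma cm_residue_from {A B e i : ℕ} (h : A + B = 0 ∨ A + B = e) (hB : B = e - i)
    (hi1 : 1 ≤ i) (hi2 : i ≤ e - 1) (he : 0 < e) (hA : A < e) : A = i := by omega

private lemma cm_exists_k (hd : 0 < d) {x y : ℕ} (hm : x % d = y % d) (hle : x ≤ y) :
    ∃ k, y = x + k * d := by
  obtain ⟨k, hk⟩ := (Nat.modEq_iff_dvd' hle).mp hm
  refine ⟨k, ?_⟩
  have h2 := (Nat.sub_eq_iff_eq_add hle).mp hk
  rw [h2, mul_comm]
  ring

private lemma cm_SS_zero : ((0, 0) : ℕ × ℕ) ∈ SS n d a := AddSubmonoid.zero_mem _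

private lemma cm_SS_add {p q : ℕ × ℕ} (hp : p ∈ SS n d a) (hq : q ∈ SS n d a) :
    p + q ∈ SS n d a := AddSubmonoid.add_mem _ hp hq

private lemma cm_SS_gen {i : ℕ} (hi : i < n) : ((a i, d - a i) : ℕ × ℕ) ∈ SS n d a :=
  AddSubmonoid.subset_closure ⟨i, hi, rfl⟩

private lemma cm_SS_e1 (hn : 4 ≤ n) (had : a (n - 1) = d) : ((d, 0) : ℕ × ℕ) ∈ SS n d a := by
  have h := cm_SS_gen (n := n) (a := a) (d := d) (i := n - 1) (by omega)
  rwa [had, Nat.sub_self] at h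

private lemma cm_SS_e2 (hn : 4 ≤ n) (ha0 : a 0 = 0) : ((0, d) : ℕ × ℕ) ∈ SS n d a := by
  have h := cm_SS_gen (n := n) (a := a) (d := d) (i := 0) (by omega)
  rwa [ha0, Nat.sub_zero] at h

private lemma cm_SS_shift1 (hn : 4 ≤ n) (had : a (n - 1) = d) {x y : ℕ}
    (h : ((x, y) : ℕ × ℕ) ∈ SS n d a) (k : ℕ) : ((x + k * d, y) : ℕ × ℕ) ∈ SS n d a := by
  induction k with
  | zero => simpa using h
  | succ k ih =>
      have h2 := cm_SS_add ih (cm_SS_e1 hn had)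
      have h3 : ((x + k * d, y) : ℕ × ℕ) + (d, 0) = (x + (k + 1) * d, y) := by
        rw [cm_pair_add, add_zero]
        have : x + k * d + d = x + (k + 1) * d := by ring
        rw [this]
      rwa [h3] at h2

private lemma cm_SS_shift2 (hn : 4 ≤ n) (ha0 : a 0 = 0) {x y : ℕ}
    (h : ((x, y) : ℕ × ℕ) ∈ SS n d a) (k : ℕ) : ((x, y + k * d) : ℕ × ℕ) ∈ SS n d a := by
  induction k with
  | zero => simpa using h
  | succ k ih =>
      have h2 := cm_SS_add ih (cm_SS_e2 hn ha0)
      have h3 : ((x, y + k * d) : ℕ × ℕ) + (0, d) = (x, y + (k + 1) * d) := by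
        rw [cm_pair_add, add_zero]
        have : y + k * d + d = y + (k + 1) * d := by ring
        rw [this]
      rwa [h3] at h2

private lemma cm_proj1 {p : ℕ × ℕ} (hp : p ∈ SS n d a) : p.1 ∈ S1 n a := by
  have hp' : p ∈ AddSubmonoid.closure {p : ℕ × ℕ | ∃ i < n, p = (a i, d - a i)} := hp
  refine AddSubmonoid.closure_induction (motive := fun x _ => x.1 ∈ S1 n a) ?_ ?_ ?_ hp'
  · rintro x ⟨i, hi, rfl⟩
    exact AddSubmonoid.subset_closure ⟨i, hi, rfl⟩
  · exact AddSubmonoid.zero_mem _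
  · intro x y _ _ hx hy
    exact AddSubmonoid.add_mem _ hx hy

private lemma cm_proj2 {p : ℕ × ℕ} (hp : p ∈ SS n d a) : p.2 ∈ S2 n d a := by
  have hp' : p ∈ AddSubmonoid.closure {p : ℕ × ℕ | ∃ i < n, p = (a i, d - a i)} := hp
  refine AddSubmonoid.closure_induction (motive := fun x _ => x.2 ∈ S2 n d a) ?_ ?_ ?_ hp'
  · rintro x ⟨i, hi, rfl⟩
    exact AddSubmonoid.subset_closure ⟨i, hi, rfl⟩
  · exact AddSubmonoid.zero_mem _
  · intro x y _ _ hx hy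
    exact AddSubmonoid.add_mem _ hx hy

private lemma cm_lift1 {x : ℕ} (hx : x ∈ S1 n a) : ∃ y, ((x, y) : ℕ × ℕ) ∈ SS n d a := by
  have hx' : x ∈ AddSubmonoid.closure {x : ℕ | ∃ i < n, a i = x} := hx
  refine AddSubmonoid.closure_induction (motive := fun x _ => ∃ y, ((x, y) : ℕ × ℕ) ∈ SS n d a)
    ?_ ?_ ?_ hx'
  · rintro x ⟨i, hi, rfl⟩
    exact ⟨d - a i, cm_SS_gen hi⟩
  · exact ⟨0, cm_SS_zero⟩
  · rintro x y _ _ ⟨u, hu⟩ ⟨v, hv⟩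
    exact ⟨u + v, cm_SS_add hu hv⟩

private lemma cm_lift2 {x : ℕ} (hx : x ∈ S2 n d a) : ∃ y, ((y, x) : ℕ × ℕ) ∈ SS n d a := by
  have hx' : x ∈ AddSubmonoid.closure {x : ℕ | ∃ i < n, d - a i = x} := hx
  refine AddSubmonoid.closure_induction (motive := fun x _ => ∃ y, ((y, x) : ℕ × ℕ) ∈ SS n d a)
    ?_ ?_ ?_ hx'
  · rintro x ⟨i, hi, rfl⟩
    exact ⟨a i, cm_SS_gen hi⟩
  · exact ⟨0, cm_SS_zero⟩
  · rintro x y _ _ ⟨u, hu⟩ ⟨v, hv⟩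
    exact ⟨u + v, cm_SS_add hu hv⟩

private lemma cm_level (hn : 4 ≤ n) (had : a (n - 1) = d)
    (hmono : ∀ i j, i < j → j ≤ n - 1 → a i < a j)
    {p : ℕ × ℕ} (hp : p ∈ SS n d a) : d ∣ p.1 + p.2 := by
  have hai : ∀ i, i < n → a i ≤ d := by
    intro i hi
    rcases Nat.lt_or_ge i (n - 1) with h | h
    · exact le_of_lt (had ▸ hmono i (n - 1) h le_rfl)
    · have hieq : i = n - 1 := by omega
      rw [hieq, had]
  have hp' : p ∈ AddSubmonoid.closure {p : ℕ × ℕ | ∃ i < n, p = (a i, d - a i)} := hp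
  refine AddSubmonoid.closure_induction (motive := fun x _ => d ∣ x.1 + x.2) ?_ ?_ ?_ hp'
  · rintro x ⟨i, hi, rfl⟩
    have h1 : a i + (d - a i) = d := by have := hai i hi; omega
    have h2 : ((a i, d - a i) : ℕ × ℕ).1 + ((a i, d - a i) : ℕ × ℕ).2 = d := h1
    rw [h2]
  · simp
  · intro x y _ _ hx hy
    have h2 : (x + y).1 + (x + y).2 = (x.1 + x.2) + (y.1 + y.2) := by
      simp [Prod.fst_add, Prod.snd_add]
      ring
    rw [h2]
    exact dvd_add hx hy

private lemma cm_S1_d (hn : 4 ≤ n) (had : a (n - 1) = d) : d ∈ S1 n a :=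
  AddSubmonoid.subset_closure ⟨n - 1, by omega, had⟩

private lemma cm_S2_d (hn : 4 ≤ n) (ha0 : a 0 = 0) : d ∈ S2 n d a :=
  AddSubmonoid.subset_closure ⟨0, by omega, by rw [ha0]; exact Nat.sub_zero d⟩

private lemma cm_S1_add_mul (hn : 4 ≤ n) (had : a (n - 1) = d) {x : ℕ}
    (hx : x ∈ S1 n a) (k : ℕ) : x + k * d ∈ S1 n a := by
  induction k with
  | zero => simpa using hx
  | succ k ih =>
      have h2 := AddSubmonoid.add_mem _ ih (cm_S1_d (a := a) hn had)
      have h3 : x + k * d + d = x + (k + 1) * d := by ring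
      rwa [h3] at h2

private lemma cm_S2_add_mul (hn : 4 ≤ n) (ha0 : a 0 = 0) {x : ℕ}
    (hx : x ∈ S2 n d a) (k : ℕ) : x + k * d ∈ S2 n d a := by
  induction k with
  | zero => simpa using hx
  | succ k ih =>
      have h2 := AddSubmonoid.add_mem _ ih (cm_S2_d (a := a) hn ha0)
      have h3 : x + k * d + d = x + (k + 1) * d := by ring
      rwa [h3] at h2

private lemma cm_Ap1_ge (hn : 4 ≤ n) (had : a (n - 1) = d) (hd : 0 < d)
    {ri x : ℕ} (hri : ri ∈ Ap1 n d a) (hx : x ∈ S1 n a) (hm : x % d = ri % d) :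
    ∃ k, x = ri + k * d := by
  rcases Nat.lt_or_ge x ri with h | h
  · exfalso
    obtain ⟨k, hk⟩ := cm_exists_k hd hm (le_of_lt h)
    have hk1 : k ≠ 0 := by rintro rfl; simp at hk; omega
    obtain ⟨k', rfl⟩ : ∃ m, k = m + 1 := ⟨k - 1, by omega⟩
    exact hri.2 ⟨x + k' * d, cm_S1_add_mul hn had hx k', by rw [hk]; ring⟩
  · exact cm_exists_k hd hm.symm h

private lemma cm_Ap2_ge (hn : 4 ≤ n) (ha0 : a 0 = 0) (hd : 0 < d)
    {ti x : ℕ} (hti : ti ∈ Ap2 n d a) (hx : x ∈ S2 n d a) (hm : x % d = ti % d) :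
    ∃ k, x = ti + k * d := by
  rcases Nat.lt_or_ge x ti with h | h
  · exfalso
    obtain ⟨k, hk⟩ := cm_exists_k hd hm (le_of_lt h)
    have hk1 : k ≠ 0 := by rintro rfl; simp at hk; omega
    obtain ⟨k', rfl⟩ : ∃ m, k = m + 1 := ⟨k - 1, by omega⟩
    exact hti.2 ⟨x + k' * d, cm_S2_add_mul hn ha0 hx k', by rw [hk]; ring⟩
  · exact cm_exists_k hd hm.symm h

private lemma cm_Ap1_zero (hn : 4 ≤ n) (had : a (n - 1) = d) (hd : 0 < d)
    {x : ℕ} (hx : x ∈ Ap1 n d a) (hm : x % d = 0) : x = 0 := by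
  have h0 : (0 : ℕ) ∈ S1 n a := AddSubmonoid.zero_mem _
  obtain ⟨k, hk⟩ := cm_Ap1_ge hn had hd hx h0 (by simp [hm])
  have h2 := hk.symm
  have h3 : x = 0 ∧ k * d = 0 := by
    constructor
    · exact Nat.eq_zero_of_add_eq_zero_right h2
    · exact Nat.eq_zero_of_add_eq_zero_left h2
  exact h3.1

private lemma cm_Ap2_zero (hn : 4 ≤ n) (ha0 : a 0 = 0) (hd : 0 < d)
    {x : ℕ} (hx : x ∈ Ap2 n d a) (hm : x % d = 0) : x = 0 := by
  have h0 : (0 : ℕ) ∈ S2 n d a := AddSubmonoid.zero_mem _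
  obtain ⟨k, hk⟩ := cm_Ap2_ge hn ha0 hd hx h0 (by simp [hm])
  exact Nat.eq_zero_of_add_eq_zero_right hk.symm

private lemma cm_reduce1 (hd : 0 < d) {x : ℕ}
    (hblock : ¬ ∃ z ∈ S1 n a, z + d = x) :
    ∀ y, ((x, y) : ℕ × ℕ) ∈ SS n d a → ∃ y', ((x, y') : ℕ × ℕ) ∈ APS n d a := by
  intro y
  induction y using Nat.strong_induction_on with
  | _ y ih =>
    intro hxy
    by_cases h2 : ∃ q ∈ SS n d a, q + ((0 : ℕ), (d : ℕ)) = ((x, y) : ℕ × ℕ)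
    · obtain ⟨⟨q1, q2⟩, hq, he⟩ := h2
      have he1 : q1 = x := by simpa using congrArg Prod.fst he
      have he2 : q2 + d = y := by simpa using congrArg Prod.snd he
      have hq' : ((x, q2) : ℕ × ℕ) ∈ SS n d a := by rw [← he1]; exact hq
      exact ih q2 (by omega) hq'
    · by_cases h1 : ∃ q ∈ SS n d a, q + ((d : ℕ), (0 : ℕ)) = ((x, y) : ℕ × ℕ)
      · obtain ⟨⟨q1, q2⟩, hq, he⟩ := h1
        have he1 : q1 + d = x := by simpa using congrArg Prod.fst he
        exact absurd ⟨q1, cm_proj1 hq, he1⟩ hblock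
      · exact ⟨y, hxy, h2, h1⟩

private lemma cm_reduce2 (hd : 0 < d) {x : ℕ}
    (hblock : ¬ ∃ z ∈ S2 n d a, z + d = x) :
    ∀ y, ((y, x) : ℕ × ℕ) ∈ SS n d a → ∃ y', ((y', x) : ℕ × ℕ) ∈ APS n d a := by
  intro y
  induction y using Nat.strong_induction_on with
  | _ y ih =>
    intro hxy
    by_cases h1 : ∃ q ∈ SS n d a, q + ((d : ℕ), (0 : ℕ)) = ((y, x) : ℕ × ℕ)
    · obtain ⟨⟨q1, q2⟩, hq, he⟩ := h1
      have he1 : q1 + d = y := by simpa using congrArg Prod.fst he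
      have he2 : q2 = x := by simpa using congrArg Prod.snd he
      have hq' : ((q1, x) : ℕ × ℕ) ∈ SS n d a := by rw [← he2]; exact hq
      exact ih q1 (by omega) hq'
    · by_cases h2 : ∃ q ∈ SS n d a, q + ((0 : ℕ), (d : ℕ)) = ((y, x) : ℕ × ℕ)
      · obtain ⟨⟨q1, q2⟩, hq, he⟩ := h2
        have he2 : q2 + d = x := by simpa using congrArg Prod.snd he
        exact absurd ⟨q2, cm_proj2 hq, he2⟩ hblock
      · exact ⟨y, hxy, h2, h1⟩

private lemma cm_exists_AP_fst (hd : 0 < d) {ri : ℕ} (hri : ri ∈ Ap1 n d a) :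
    ∃ p, p ∈ APS n d a ∧ p.1 = ri := by
  obtain ⟨y, hy⟩ := cm_lift1 (d := d) hri.1
  obtain ⟨y', hy'⟩ := cm_reduce1 hd hri.2 y hy
  exact ⟨(ri, y'), hy', rfl⟩

private lemma cm_exists_AP_snd (hd : 0 < d) {ti : ℕ} (hti : ti ∈ Ap2 n d a) :
    ∃ p, p ∈ APS n d a ∧ p.2 = ti := by
  obtain ⟨y, hy⟩ := cm_lift2 hti.1
  obtain ⟨y', hy'⟩ := cm_reduce2 hd hti.2 y hy
  exact ⟨(y', ti), hy', rfl⟩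

private lemma cm_step (hn : 4 ≤ n) (ha0 : a 0 = 0) (had : a (n - 1) = d)
    (hE : ES n d a = ∅) {x y x2 : ℕ} (α γ : ℕ)
    (hw : ((x, y) : ℕ × ℕ) ∈ SS n d a)
    (hw' : ((x + α * d + d, x2) : ℕ × ℕ) ∈ SS n d a)
    (hy : y = x2 + γ * d + d) :
    ((x + α * d, x2 + γ * d) : ℕ × ℕ) ∈ SS n d a := by
  have hP : ((x + α * d + d, y) : ℕ × ℕ) ∈ SS n d a := by
    have h1 := cm_SS_add (cm_SS_shift1 hn had hw α) (cm_SS_e1 hn had)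
    have h2 : ((x + α * d, y) : ℕ × ℕ) + (d, 0) = (x + α * d + d, y) := by
      rw [cm_pair_add, add_zero]
    rwa [h2] at h1
  have hu : ∃ q ∈ SS n d a, q + ((0 : ℕ), (d : ℕ)) = ((x + α * d + d, y) : ℕ × ℕ) := by
    refine ⟨(x + α * d + d, x2 + γ * d), cm_SS_shift2 hn ha0 hw' γ, ?_⟩
    rw [cm_pair_add, add_zero, hy]
  have hv : ∃ q ∈ SS n d a, q + ((d : ℕ), (0 : ℕ)) = ((x + α * d + d, y) : ℕ × ℕ) := by
    refine ⟨(x + α * d, y), cm_SS_shift1 hn had hw α, ?_⟩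
    rw [cm_pair_add, add_zero]
  have hdd : ∃ q ∈ SS n d a, q + ((d : ℕ), (d : ℕ)) = ((x + α * d + d, y) : ℕ × ℕ) := by
    by_contra hno
    exact (Set.eq_empty_iff_forall_notMem.mp hE) _ ⟨hP, hu, hv, hno⟩
  obtain ⟨⟨q1, q2⟩, hq, he⟩ := hdd
  have e1 : q1 + d = x + α * d + d := by simpa using congrArg Prod.fst he
  have e2 : q2 + d = y := by simpa using congrArg Prod.snd he
  have f1 : q1 = x + α * d := Nat.add_right_cancel e1
  have f2 : q2 = x2 + γ * d := Nat.add_right_cancel (e2.trans hy)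
  rw [← f1, ← f2]
  exact hq

private lemma cm_lemL (hn : 4 ≤ n) (ha0 : a 0 = 0) (had : a (n - 1) = d)
    (hE : ES n d a = ∅) :
    ∀ α x y x2 γ : ℕ, ((x, y) : ℕ × ℕ) ∈ SS n d a →
      ((x + α * d + d, x2) : ℕ × ℕ) ∈ SS n d a → y = x2 + γ * d + d →
      ((x, x2 + γ * d) : ℕ × ℕ) ∈ SS n d a := by
  intro α
  induction α with
  | zero =>
      intro x y x2 γ hw hw' hy
      have h := cm_step hn ha0 had hE 0 γ hw hw' hy
      rwa [zero_mul, add_zero] at h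
  | succ α ih =>
      intro x y x2 γ hw hw' hy
      have h := cm_step hn ha0 had hE (α + 1) γ hw hw' hy
      have e : x + (α + 1) * d = x + α * d + d := by ring
      rw [e] at h
      have hy2 : y = (x2 + γ * d) + 0 * d + d := by rw [zero_mul, add_zero]; exact hy
      have h2 := ih x y (x2 + γ * d) 0 hw h hy2
      rwa [zero_mul, add_zero] at h2

private lemma cm_card_range {e : ℕ} {g : Fin e → ℕ × ℕ} (hg : Function.Injective g) :
    (Set.range g).ncard = e := by
  rw [← Nat.card_coe_set_eq, Nat.card_range_of_injective hg, Nat.card_eq_fintype_card,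
    Fintype.card_fin]

private def cmG (d : ℕ) (r t : ℕ → ℕ) : Fin d → ℕ × ℕ :=
  fun i => if (i : ℕ) = 0 then ((0 : ℕ), (0 : ℕ)) else (r i, t (d - i))

private lemma cmG_zero {d : ℕ} (r t : ℕ → ℕ) (i : Fin d) (h : (i : ℕ) = 0) :
    cmG d r t i = ((0 : ℕ), (0 : ℕ)) := by simp [cmG, h]

private lemma cmG_pos {d : ℕ} (r t : ℕ → ℕ) (i : Fin d) (h : ¬ (i : ℕ) = 0) :
    cmG d r t i = (r i, t (d - i)) := by simp [cmG, h]

private lemma cm_uniq (hn : 4 ≤ n) (ha0 : a 0 = 0) (had : a (n - 1) = d)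
    (hmono : ∀ i j, i < j → j ≤ n - 1 → a i < a j) (hd : 0 < d) (hE : ES n d a = ∅) :
    ∀ p q : ℕ × ℕ, p ∈ APS n d a → q ∈ APS n d a → p.1 % d = q.1 % d → p = q := by
  have key : ∀ x1 y1 x2 y2 : ℕ, ((x1, y1) : ℕ × ℕ) ∈ APS n d a →
      ((x2, y2) : ℕ × ℕ) ∈ APS n d a → x1 % d = x2 % d → x1 < x2 → False := by
    intro x1 y1 x2 y2 hp hq hm hlt
    have hl1 : d ∣ x1 + y1 := cm_level hn had hmono hp.1
    have hl2 : d ∣ x2 + y2 := cm_level hn had hmono hq.1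
    have hm2 : y1 % d = y2 % d :=
      cm_mod2 (Nat.mod_lt _ hd) (Nat.mod_lt _ hd) (cm_res_pair hd hl1) (cm_res_pair hd hl2) hm
    obtain ⟨α, hα⟩ := cm_exists_k hd hm (le_of_lt hlt)
    have hα0 : α ≠ 0 := by rintro rfl; simp at hα; omega
    obtain ⟨α', rfl⟩ : ∃ m, α = m + 1 := ⟨α - 1, by omega⟩
    rcases le_or_gt y1 y2 with hle | hlt2
    · obtain ⟨β, hβ⟩ := cm_exists_k hd hm2 hle
      refine hq.2.2 ⟨(x1 + α' * d, y1 + β * d),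
        cm_SS_shift2 hn ha0 (cm_SS_shift1 hn had hp.1 α') β, ?_⟩
      rw [cm_pair_add, add_zero]
      have e1 : x1 + α' * d + d = x2 := by rw [hα]; ring
      have e2 : y1 + β * d = y2 := hβ.symm
      rw [e1, e2]
    · obtain ⟨γ, hγ⟩ := cm_exists_k hd hm2.symm (le_of_lt hlt2)
      have hγ0 : γ ≠ 0 := by rintro rfl; simp at hγ; omega
      obtain ⟨γ', rfl⟩ : ∃ m, γ = m + 1 := ⟨γ - 1, by omega⟩
      have hw' : ((x1 + α' * d + d, y2) : ℕ × ℕ) ∈ SS n d a := by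
        have e1 : x1 + α' * d + d = x2 := by rw [hα]; ring
        rw [e1]
        exact hq.1
      have hyy : y1 = y2 + γ' * d + d := by rw [hγ]; ring
      have hL := cm_lemL hn ha0 had hE α' x1 y1 y2 γ' hp.1 hw' hyy
      refine hp.2.1 ⟨(x1, y2 + γ' * d), hL, ?_⟩
      rw [cm_pair_add, add_zero]
      have e2 : y2 + γ' * d + d = y1 := by rw [hγ]; ring
      rw [e2]
  intro p q hp hq hm
  obtain ⟨x1, y1⟩ := p
  obtain ⟨x2, y2⟩ := q
  rcases lt_trichotomy x1 x2 with h | h | h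
  · exact (key x1 y1 x2 y2 hp hq hm h).elim
  · rw [← h] at hq
    have hl1 : d ∣ x1 + y1 := cm_level hn had hmono hp.1
    have hl2 : d ∣ x1 + y2 := cm_level hn had hmono hq.1
    have hm2 : y1 % d = y2 % d :=
      cm_mod2 (Nat.mod_lt _ hd) (Nat.mod_lt _ hd) (cm_res_pair hd hl1) (cm_res_pair hd hl2) rfl
    rcases lt_trichotomy y1 y2 with h2 | h2 | h2
    · exfalso
      obtain ⟨β, hβ⟩ := cm_exists_k hd hm2 (le_of_lt h2)
      have hβ0 : β ≠ 0 := by rintro rfl; simp at hβ; omega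
      obtain ⟨β', rfl⟩ : ∃ m, β = m + 1 := ⟨β - 1, by omega⟩
      refine hq.2.1 ⟨(x1, y1 + β' * d), cm_SS_shift2 hn ha0 hp.1 β', ?_⟩
      rw [cm_pair_add, add_zero]
      have e2 : y1 + β' * d + d = y2 := by rw [hβ]; ring
      rw [e2]
    · rw [h, h2]
    · exfalso
      obtain ⟨β, hβ⟩ := cm_exists_k hd hm2.symm (le_of_lt h2)
      have hβ0 : β ≠ 0 := by rintro rfl; simp at hβ; omega
      obtain ⟨β', rfl⟩ : ∃ m, β = m + 1 := ⟨β - 1, by omega⟩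
      refine hp.2.1 ⟨(x1, y2 + β' * d), cm_SS_shift2 hn ha0 hq.1 β', ?_⟩
      rw [cm_pair_add, add_zero]
      have e2 : y2 + β' * d + d = y1 := by rw [hβ]; ring
      rw [e2]
  · exact (key x2 y2 x1 y1 hq hp hm.symm h).elim

end CMHelpers

/-- Characterization of arithmetic Cohen–Macaulayness of the curve `C_A`:
(i) `(rᵢ, t_{d-i}) ∈ S` for all `1 ≤ i ≤ d-1`;
(ii) `AP_S = {(0,0)} ∪ {(rᵢ, t_{d-i}) : 1 ≤ i ≤ d-1}`;
(iii) `|AP_S| = d`; (iv) `E_S = ∅` are all equivalent. -/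
theorem charCM (n d : ℕ) (a : ℕ → ℕ)
    (hn : 4 ≤ n)
    (ha0 : a 0 = 0)
    (had : a (n - 1) = d)
    (hmono : ∀ i j, i < j → j ≤ n - 1 → a i < a j)
    (hgcd : (Finset.Icc 1 (n - 1)).gcd a = 1)
    (r t : ℕ → ℕ)
    (hr : ∀ i < d, r i ∈ Ap1 n d a ∧ r i % d = i % d)
    (ht : ∀ i < d, t i ∈ Ap2 n d a ∧ t i % d = i % d) :
    List.TFAE
      [ (∀ i : ℕ, 1 ≤ i → i ≤ d - 1 → (r i, t (d - i)) ∈ SS n d a),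
        APS n d a
          = ({((0 : ℕ), (0 : ℕ))} : Set (ℕ × ℕ))
              ∪ {p | ∃ i : ℕ, 1 ≤ i ∧ i ≤ d - 1 ∧ p = (r i, t (d - i))},
        (APS n d a).ncard = d,
        ES n d a = ∅ ] := by
  have hd : 0 < d := by
    have h := hmono 0 (n - 1) (by omega) le_rfl
    rw [ha0, had] at h
    exact h
  tfae_have 1 → 2 := by
    intro h1
    ext ⟨x, y⟩
    constructor
    · rintro ⟨hS, hu, hv⟩
      have hx1 : x ∈ S1 n a := cm_proj1 hS
      have hy2 : y ∈ S2 n d a := cm_proj2 hS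
      obtain ⟨I, hI⟩ : ∃ I, x % d = I := ⟨_, rfl⟩
      obtain ⟨J, hJ⟩ : ∃ J, y % d = J := ⟨_, rfl⟩
      have hIlt : I < d := hI ▸ Nat.mod_lt _ hd
      have hJlt : J < d := hJ ▸ Nat.mod_lt _ hd
      obtain ⟨α, hα⟩ := cm_Ap1_ge hn had hd (hr I hIlt).1 hx1
        (by rw [hI, (hr I hIlt).2, Nat.mod_eq_of_lt hIlt])
      obtain ⟨β, hβ⟩ := cm_Ap2_ge hn ha0 hd (ht J hJlt).1 hy2
        (by rw [hJ, (ht J hJlt).2, Nat.mod_eq_of_lt hJlt])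
      have hlev : d ∣ x + y := cm_level hn had hmono hS
      have hres := cm_res_pair hd hlev
      rw [hI, hJ] at hres
      rcases Nat.eq_zero_or_pos I with hI0 | hIpos
      · have hJ0 : J = 0 := cm_resB0 hres hI0 hJlt
        have hr0 : r I = 0 := cm_Ap1_zero hn had hd (hr I hIlt).1
          (by rw [(hr I hIlt).2, Nat.mod_eq_of_lt hIlt, hI0])
        have ht0 : t J = 0 := cm_Ap2_zero hn ha0 hd (ht J hJlt).1
          (by rw [(ht J hJlt).2, Nat.mod_eq_of_lt hJlt, hJ0])
        have hα0 : α = 0 := by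
          by_contra hne
          obtain ⟨α', rfl⟩ : ∃ m, α = m + 1 := ⟨α - 1, by omega⟩
          refine hv ⟨(α' * d, β * d), ?_, ?_⟩
          · simpa using cm_SS_shift2 hn ha0 (cm_SS_shift1 hn had cm_SS_zero α') β
          · rw [cm_pair_add, add_zero]
            have e1 : α' * d + d = x := by rw [hα, hr0]; ring
            have e2 : β * d = y := by rw [hβ, ht0]; ring
            rw [e1, e2]
        have hβ0 : β = 0 := by
          by_contra hne
          obtain ⟨β', rfl⟩ : ∃ m, β = m + 1 := ⟨β - 1, by omega⟩
          refine hu ⟨(α * d, β' * d), ?_, ?_⟩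
          · simpa using cm_SS_shift2 hn ha0 (cm_SS_shift1 hn had cm_SS_zero α) β'
          · rw [cm_pair_add, add_zero]
            have e1 : α * d = x := by rw [hα, hr0]; ring
            have e2 : β' * d + d = y := by rw [hβ, ht0]; ring
            rw [e1, e2]
        have ex : x = 0 := by rw [hα, hr0, hα0]; ring
        have ey : y = 0 := by rw [hβ, ht0, hβ0]; ring
        exact Or.inl (by simp [ex, ey])
      · have hJ' : J = d - I := cm_resB hres hIpos
        have hqS : ((r I, t (d - I)) : ℕ × ℕ) ∈ SS n d a :=
          h1 I hIpos (by omega)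
        rw [hJ'] at hβ
        have hα0 : α = 0 := by
          by_contra hne
          obtain ⟨α', rfl⟩ : ∃ m, α = m + 1 := ⟨α - 1, by omega⟩
          refine hv ⟨(r I + α' * d, t (d - I) + β * d),
            cm_SS_shift2 hn ha0 (cm_SS_shift1 hn had hqS α') β, ?_⟩
          rw [cm_pair_add, add_zero]
          have e1 : r I + α' * d + d = x := by rw [hα]; ring
          have e2 : t (d - I) + β * d = y := hβ.symm
          rw [e1, e2]
        have hβ0 : β = 0 := by
          by_contra hne
          obtain ⟨β', rfl⟩ : ∃ m, β = m + 1 := ⟨β - 1, by omega⟩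
          refine hu ⟨(r I + α * d, t (d - I) + β' * d),
            cm_SS_shift2 hn ha0 (cm_SS_shift1 hn had hqS α) β', ?_⟩
          rw [cm_pair_add, add_zero]
          have e1 : r I + α * d = x := hα.symm
          have e2 : t (d - I) + β' * d + d = y := by rw [hβ]; ring
          rw [e1, e2]
        refine Or.inr ⟨I, hIpos, by omega, ?_⟩
        have ex : x = r I := by rw [hα, hα0]; ring
        have ey : y = t (d - I) := by rw [hβ, hβ0]; ring
        rw [ex, ey]
    · rintro (hp | ⟨i, hi1, hi2, hp⟩)
      · have hp' : ((x, y) : ℕ × ℕ) = ((0 : ℕ), (0 : ℕ)) := hp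
        have hx0 : x = 0 := congrArg Prod.fst hp'
        have hy0 : y = 0 := congrArg Prod.snd hp'
        subst hx0
        subst hy0
        refine ⟨cm_SS_zero, ?_, ?_⟩
        · rintro ⟨⟨q1, q2⟩, hq, he⟩
          have h2 : q2 + d = 0 := by simpa using congrArg Prod.snd he
          omega
        · rintro ⟨⟨q1, q2⟩, hq, he⟩
          have h2 : q1 + d = 0 := by simpa using congrArg Prod.fst he
          omega
      · have hp' : ((x, y) : ℕ × ℕ) = (r i, t (d - i)) := hp
        have hx : x = r i := congrArg Prod.fst hp'
        have hy : y = t (d - i) := congrArg Prod.snd hp'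
        subst hx
        subst hy
        refine ⟨h1 i hi1 hi2, ?_, ?_⟩
        · rintro ⟨⟨q1, q2⟩, hq, he⟩
          have e2 : q2 + d = t (d - i) := by simpa using congrArg Prod.snd he
          exact (ht (d - i) (by omega)).1.2 ⟨q2, cm_proj2 hq, e2⟩
        · rintro ⟨⟨q1, q2⟩, hq, he⟩
          have e1 : q1 + d = r i := by simpa using congrArg Prod.fst he
          exact (hr i (by omega)).1.2 ⟨q1, cm_proj1 hq, e1⟩
  tfae_have 2 → 3 := by
    intro h2
    have hginj : Function.Injective (cmG d r t) := by
      intro i j hij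
      by_cases hi0 : (i : ℕ) = 0 <;> by_cases hj0 : (j : ℕ) = 0
      · exact Fin.ext (by rw [hi0, hj0])
      · exfalso
        rw [cmG_zero r t i hi0, cmG_pos r t j hj0] at hij
        have hrj : r j = 0 := (congrArg Prod.fst hij).symm
        have hmj := (hr j j.2).2
        rw [hrj, Nat.zero_mod, Nat.mod_eq_of_lt j.2] at hmj
        exact hj0 hmj.symm
      · exfalso
        rw [cmG_pos r t i hi0, cmG_zero r t j hj0] at hij
        have hri : r i = 0 := congrArg Prod.fst hij
        have hmi := (hr i i.2).2
        rw [hri, Nat.zero_mod, Nat.mod_eq_of_lt i.2] at hmi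
        exact hi0 hmi.symm
      · rw [cmG_pos r t i hi0, cmG_pos r t j hj0] at hij
        have hrij : r i = r j := congrArg Prod.fst hij
        apply Fin.ext
        have e1 := (hr i i.2).2
        have e2 := (hr j j.2).2
        rw [← Nat.mod_eq_of_lt i.2, ← Nat.mod_eq_of_lt j.2, ← e1, ← e2, hrij]
    have hrange : APS n d a = Set.range (cmG d r t) := by
      rw [h2]
      ext p
      constructor
      · rintro (hp | ⟨i, hi1, hi2, hp⟩)
        · have hp' : p = ((0 : ℕ), (0 : ℕ)) := hp
          exact ⟨⟨0, hd⟩, by rw [cmG_zero r t _ rfl, hp']⟩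
        · refine ⟨⟨i, by omega⟩, ?_⟩
          rw [cmG_pos r t ⟨i, by omega⟩ (by simpa using by omega : ¬ ((⟨i, by omega⟩ : Fin d) : ℕ) = 0)]
          exact hp.symm
      · rintro ⟨i, rfl⟩
        by_cases hi0 : (i : ℕ) = 0
        · exact Or.inl (by rw [cmG_zero r t i hi0]; rfl)
        · refine Or.inr ⟨(i : ℕ), by omega, ?_, by rw [cmG_pos r t i hi0]⟩
          have := i.2
          omega
    rw [hrange]
    exact cm_card_range hginj
  tfae_have 3 → 1 := by
    intro h3 i hi1 hi2
    have hd1 : ∀ j : Fin d, ∃ p, p ∈ APS n d a ∧ p.1 = r j :=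
      fun j => cm_exists_AP_fst hd (hr j j.2).1
    choose g hg1 hg2 using hd1
    have hmodg : ∀ j : Fin d, (g j).1 % d = (j : ℕ) := by
      intro j
      rw [hg2 j, (hr j j.2).2, Nat.mod_eq_of_lt j.2]
    have hginj : Function.Injective g := by
      intro j k hjk
      apply Fin.ext
      rw [← hmodg j, ← hmodg k, hjk]
    have hsub : Set.range g ⊆ APS n d a := by
      rintro p ⟨j, rfl⟩
      exact hg1 j
    have hfin : (APS n d a).Finite := by
      by_contra hinf
      have h0 := Set.Infinite.ncard hinf
      omega
    have heq : Set.range g = APS n d a :=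
      Set.eq_of_subset_of_ncard_le hsub (by rw [h3, cm_card_range hginj]) hfin
    obtain ⟨p, hp, hpe⟩ := cm_exists_AP_snd hd (ht (d - i) (by omega)).1
    have hlev : d ∣ p.1 + p.2 := cm_level hn had hmono hp.1
    have hp2m : p.2 % d = d - i := by
      rw [hpe, (ht (d - i) (by omega)).2, Nat.mod_eq_of_lt (by omega)]
    have hp1m : p.1 % d = i :=
      cm_residue_from (cm_res_pair hd hlev) hp2m hi1 hi2 hd (Nat.mod_lt _ hd)
    have hpr : p ∈ Set.range g := by rw [heq]; exact hp
    obtain ⟨j, hj⟩ := hpr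
    have hji : (j : ℕ) = i := by
      rw [← hmodg j, hj]
      exact hp1m
    have hp1 : p.1 = r i := by rw [← hj, hg2 j, hji]
    have hfinal : p = ((r i, t (d - i)) : ℕ × ℕ) := Prod.ext_iff.mpr ⟨hp1, hpe⟩
    rw [← hfinal]
    exact hp.1
  tfae_have 1 → 4 := by
    intro h1
    rw [Set.eq_empty_iff_forall_notMem]
    rintro ⟨x, y⟩ ⟨hS, ⟨⟨u1, u2⟩, huS, hue⟩, ⟨⟨v1, v2⟩, hvS, hve⟩, hno⟩
    have hu1 : u1 = x := by simpa using congrArg Prod.fst hue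
    have hu2 : u2 + d = y := by simpa using congrArg Prod.snd hue
    have hv1 : v1 + d = x := by simpa using congrArg Prod.fst hve
    have hv2 : v2 = y := by simpa using congrArg Prod.snd hve
    rw [hu1] at huS
    rw [hv2] at hvS
    have hv1S : v1 ∈ S1 n a := cm_proj1 hvS
    have hu2S : u2 ∈ S2 n d a := cm_proj2 huS
    obtain ⟨I, hI⟩ : ∃ I, v1 % d = I := ⟨_, rfl⟩
    obtain ⟨J, hJ⟩ : ∃ J, u2 % d = J := ⟨_, rfl⟩
    have hIlt : I < d := hI ▸ Nat.mod_lt _ hd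
    have hJlt : J < d := hJ ▸ Nat.mod_lt _ hd
    obtain ⟨α, hα⟩ := cm_Ap1_ge hn had hd (hr I hIlt).1 hv1S
      (by rw [hI, (hr I hIlt).2, Nat.mod_eq_of_lt hIlt])
    obtain ⟨β, hβ⟩ := cm_Ap2_ge hn ha0 hd (ht J hJlt).1 hu2S
      (by rw [hJ, (ht J hJlt).2, Nat.mod_eq_of_lt hJlt])
    have hlevu : d ∣ x + u2 := cm_level hn had hmono huS
    have hxm : x % d = I := by rw [← hv1, Nat.add_mod_right, hI]
    have hres := cm_res_pair hd hlevu
    rw [hxm, hJ] at hres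
    rcases Nat.eq_zero_or_pos I with hI0 | hIpos
    · have hJ0 : J = 0 := cm_resB0 hres hI0 hJlt
      have hr0 : r I = 0 := cm_Ap1_zero hn had hd (hr I hIlt).1
        (by rw [(hr I hIlt).2, Nat.mod_eq_of_lt hIlt, hI0])
      have ht0 : t J = 0 := cm_Ap2_zero hn ha0 hd (ht J hJlt).1
        (by rw [(ht J hJlt).2, Nat.mod_eq_of_lt hJlt, hJ0])
      apply hno
      refine ⟨(α * d, β * d), ?_, ?_⟩
      · simpa using cm_SS_shift2 hn ha0 (cm_SS_shift1 hn had cm_SS_zero α) β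
      · rw [cm_pair_add]
        have e1 : α * d + d = x := by rw [← hv1, hα, hr0]; ring
        have e2 : β * d + d = y := by rw [← hu2, hβ, ht0]; ring
        rw [e1, e2]
    · have hJ' : J = d - I := cm_resB hres hIpos
      have hqS : ((r I, t (d - I)) : ℕ × ℕ) ∈ SS n d a :=
        h1 I hIpos (by omega)
      apply hno
      refine ⟨(r I + α * d, t (d - I) + β * d),
        cm_SS_shift2 hn ha0 (cm_SS_shift1 hn had hqS α) β, ?_⟩
      rw [cm_pair_add]
      have e1 : r I + α * d + d = x := by rw [← hv1, ← hα]
      have e2 : t (d - I) + β * d + d = y := by rw [← hu2, ← hJ', ← hβ]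
      rw [e1, e2]
  tfae_have 4 → 3 := by
    intro h4
    have huq := cm_uniq hn ha0 had hmono hd h4
    have hd1 : ∀ j : Fin d, ∃ p, p ∈ APS n d a ∧ p.1 = r j :=
      fun j => cm_exists_AP_fst hd (hr j j.2).1
    choose g hg1 hg2 using hd1
    have hmodg : ∀ j : Fin d, (g j).1 % d = (j : ℕ) := by
      intro j
      rw [hg2 j, (hr j j.2).2, Nat.mod_eq_of_lt j.2]
    have hginj : Function.Injective g := by
      intro j k hjk
      apply Fin.ext
      rw [← hmodg j, ← hmodg k, hjk]
    have heq : APS n d a = Set.range g := by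
      ext p
      constructor
      · intro hp
        refine ⟨⟨p.1 % d, Nat.mod_lt _ hd⟩, ?_⟩
        exact huq _ _ (hg1 _) hp (hmodg _)
      · rintro ⟨j, rfl⟩
        exact hg1 j
    rw [heq]
    exact cm_card_range hginj
  tfae_finish


end SumsetsCurve
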